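/- Let G be a uniform pro-p group and Z_p[G] the group algebra of the underlying abstract group. The filtration on Z_p[G] induced by the p-valuation ω (whose n-th term A_n is the Z_p-submodule generated by all elements p^l(g_1 − 1)⋯(g_m − 1) with l, m ∈ N, g_i ∈ G and l + ω(g_1) + ⋯ + ω(g_m) ≥ n) coincides with the M_d-adic filtration, i.e. A_n = M_d^n for all n, where M_d = pZ_p[G] + I_d(G) and I_d(G) is the augmentation ideal of Z_p[G]. -/

import Mathlib

/-! Basic definitions: pro-`p` groups, the lower `p`-series, powerful/uniform/extra-powerful
pro-`p` groups, compact `p`-adic analytic groups (via Lazard's characterisation), and the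
completed group ring (Iwasawa algebra) of a profinite group. -/

noncomputable section

open scoped Classical

/-- The (topological closure of the) subgroup generated by `q`-th powers of elements of `H`. -/
def Subgroup.qPow {G : Type} [Group G] [TopologicalSpace G] [IsTopologicalGroup G]
    (q : ℕ) (H : Subgroup G) : Subgroup G :=
  (Subgroup.closure ((fun g => g ^ q) '' (H : Set G))).topologicalClosure

/-- The lower `p`-series of a topological group; `lowerPSeries p G n` is the subgroup
`P_{n+1}(G)`, so that `lowerPSeries p G 0 = P_1(G) = G` and
`P_{i+1}(G) = closure (P_i(G)^p [P_i(G), G])`. -/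
def lowerPSeries (p : ℕ) (G : Type) [Group G] [TopologicalSpace G] [IsTopologicalGroup G] :
    ℕ → Subgroup G
  | 0 => ⊤
  | (n + 1) =>
      ((lowerPSeries p G n).qPow p ⊔ ⁅lowerPSeries p G n, (⊤ : Subgroup G)⁆).topologicalClosure

/-- A topological group is topologically finitely generated if some finite subset generates a
dense subgroup. -/
def IsTopFinitelyGenerated (G : Type) [Group G] [TopologicalSpace G] [IsTopologicalGroup G] :
    Prop :=
  ∃ S : Finset G, (Subgroup.closure (S : Set G)).topologicalClosure = ⊤

/-- The minimal number of topological generators of `G`. -/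
def topGenRank (G : Type) [Group G] [TopologicalSpace G] [IsTopologicalGroup G] : ℕ :=
  sInf {n : ℕ | ∃ S : Finset G, S.card = n ∧ (Subgroup.closure (S : Set G)).topologicalClosure = ⊤}

/-- A profinite group which is pro-`p`: it is a compact, Hausdorff, totally disconnected
topological group all of whose continuous finite quotients are `p`-groups. -/
def IsProPGroup (p : ℕ) (G : Type) [Group G] [TopologicalSpace G] : Prop :=
  IsTopologicalGroup G ∧ CompactSpace G ∧ T2Space G ∧ TotallyDisconnectedSpace G ∧
    ∀ N : OpenNormalSubgroup G, IsPGroup p (G ⧸ N.toSubgroup)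

/-- `G` is a powerful pro-`p` group (for odd `p`): `[G,G] ⊆ closure (G^p)`. -/
def IsPowerful (p : ℕ) (G : Type) [Group G] [TopologicalSpace G] [IsTopologicalGroup G] : Prop :=
  ⁅(⊤ : Subgroup G), (⊤ : Subgroup G)⁆ ≤ (⊤ : Subgroup G).qPow p

/-- `G` is an extra-powerful pro-`p` group: `[G,G] ⊆ closure (G^{p²})`. -/
def IsExtraPowerful (p : ℕ) (G : Type) [Group G] [TopologicalSpace G] [IsTopologicalGroup G] :
    Prop :=
  ⁅(⊤ : Subgroup G), (⊤ : Subgroup G)⁆ ≤ (⊤ : Subgroup G).qPow (p ^ 2)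

/-- `G` is a uniform pro-`p` group: a finitely generated powerful pro-`p` group for which
the `p`-power maps `P_i(G) → P_{i+1}(G)` between consecutive terms of the lower `p`-series
are bijective. -/
def IsUniform (p : ℕ) (G : Type) [Group G] [TopologicalSpace G] [IsTopologicalGroup G] : Prop :=
  IsProPGroup p G ∧ IsPowerful p G ∧ IsTopFinitelyGenerated G ∧
    ∀ n : ℕ, Set.BijOn (fun g => g ^ p)
      (lowerPSeries p G n : Set G) (lowerPSeries p G (n + 1) : Set G)

/-- A compact `p`-adic analytic group, via Lazard's characterisation: a profinite group
containing an open uniform pro-`p` subgroup. -/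
def IsCompactPadicAnalytic (p : ℕ) (G : Type) [Group G] [TopologicalSpace G] : Prop :=
  ∃ _ : IsTopologicalGroup G, CompactSpace G ∧ T2Space G ∧ TotallyDisconnectedSpace G ∧
    ∃ H : Subgroup G, IsOpen (H : Set G) ∧ IsUniform p H

/-- `G` has no `p`-torsion. -/
def HasNoPTorsion (p : ℕ) (G : Type) [Group G] : Prop :=
  ∀ g : G, g ^ p = 1 → g = 1

section RingPowers

variable {Λ : Type} [Ring Λ]

/-- The additive subgroup generated by all products of `n` elements of `S` (for `n = 0` this is
the whole ring, matching the convention `𝔪^0 = Λ`).  When `S` is a two-sided ideal, this is the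
`n`-th power of `S`. -/
def AddSubgroup.ringPow (S : AddSubgroup Λ) : ℕ → AddSubgroup Λ
  | 0 => ⊤
  | (n + 1) => AddSubgroup.closure
      {x : Λ | ∃ l : List Λ, l.length = n + 1 ∧ (∀ y ∈ l, y ∈ S) ∧ x = l.prod}

end RingPowers


section GroupAlgebra

variable (p : ℕ) [Fact p.Prime] (G : Type) [Group G] [TopologicalSpace G] [IsTopologicalGroup G]

/-- The augmentation map `ℤ_p[G] → ℤ_p` of the abstract group algebra. -/
def maAug : MonoidAlgebra ℤ_[p] G →+* ℤ_[p] :=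
  MonoidAlgebra.liftNCRingHom (RingHom.id ℤ_[p]) (1 : G →* ℤ_[p]) fun _ _ => Commute.all _ _

/-- The two-sided ideal `𝔪_d = p·ℤ_p[G] + I_d(G)` of the abstract group algebra `ℤ_p[G]`,
where `I_d(G)` is the augmentation ideal; realised as an additive subgroup. -/
def mdIdeal : AddSubgroup (MonoidAlgebra ℤ_[p] G) :=
  (AddMonoidHom.mulLeft ((p : ℕ) : MonoidAlgebra ℤ_[p] G)).range ⊔
    (RingHom.ker (maAug p G)).toAddSubgroup

/-- Lazard's `p`-valuation `ω : G → ℕ_{>0} ∪ {∞}` attached to the lower `p`-series: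
`ω(g) = sup { i  :  g ∈ P_i(G) }` (recall `lowerPSeries p G t = P_{t+1}(G)`). -/
def omegaVal (g : G) : ℕ∞ :=
  sSup {x : ℕ∞ | ∃ t : ℕ, x = (t : ℕ∞) + 1 ∧ g ∈ lowerPSeries p G t}

end GroupAlgebra

section Statement

variable (p : ℕ) [Fact p.Prime] (G : Type) [Group G] [TopologicalSpace G] [IsTopologicalGroup G]

/-- The generating set of the `n`-th term `A_n` of the filtration on `ℤ_p[G]` induced by the
`p`-valuation `ω`: all elements `p^l (g_1 − 1) ⋯ (g_m − 1)` with
`l + ω(g_1) + ⋯ + ω(g_m) ≥ n`. -/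
def omegaFiltGenSet (n : ℕ) : Set (MonoidAlgebra ℤ_[p] G) :=
  {x | ∃ (l : ℕ) (L : List G),
    (n : ℕ∞) ≤ (l : ℕ∞) + (L.map (omegaVal p G)).sum ∧
    x = (p : ℤ_[p]) ^ l • (L.map fun g => MonoidAlgebra.of ℤ_[p] G g - 1).prod}

/-! ### Auxiliary lemmas -/

section Aux

variable {p G}

local notation "MA" => MonoidAlgebra ℤ_[p] G

lemma maAug_single (g : G) (c : ℤ_[p]) :
    maAug p G (MonoidAlgebra.single g c) = c := by
  simp [maAug, MonoidAlgebra.liftNCRingHom, MonoidAlgebra.liftNC_single]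

lemma maAug_of (g : G) : maAug p G (MonoidAlgebra.of ℤ_[p] G g) = 1 := by
  simpa [MonoidAlgebra.of_apply] using maAug_single (p := p) g 1

lemma mem_mdIdeal_pcast : ((p : ℕ) : MA) ∈ mdIdeal p G :=
  SetLike.le_def.mp le_sup_left (AddMonoidHom.mem_range.mpr ⟨1, mul_one _⟩)

lemma mem_mdIdeal_of_aug_eq_zero {x : MA} (hx : maAug p G x = 0) : x ∈ mdIdeal p G :=
  SetLike.le_def.mp le_sup_right (by simpa [RingHom.mem_ker] using hx)

lemma of_sub_one_mem_mdIdeal (g : G) :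
    MonoidAlgebra.of ℤ_[p] G g - 1 ∈ mdIdeal p G := by
  refine mem_mdIdeal_of_aug_eq_zero ?_
  rw [map_sub, maAug_of, map_one, sub_self]

lemma mdi_mul_left (a : MA) {x : MA} (hx : x ∈ mdIdeal p G) :
    a * x ∈ mdIdeal p G := by
  rcases (AddSubgroup.mem_sup).mp hx with ⟨y, hy, z, hz, rfl⟩
  rcases AddMonoidHom.mem_range.mp hy with ⟨c, rfl⟩
  have hz' : maAug p G z = 0 := by
    simpa [RingHom.mem_ker] using hz
  have h1 : a * (AddMonoidHom.mulLeft ((p : ℕ) : MA) c + z)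
      = AddMonoidHom.mulLeft ((p : ℕ) : MA) (a * c) + a * z := by
    simp only [AddMonoidHom.coe_mulLeft]
    rw [mul_add, ← mul_assoc, ← (Nat.cast_commute (p : ℕ) a).eq, mul_assoc]
  rw [h1]
  refine (AddSubgroup.mem_sup).mpr
    ⟨_, AddMonoidHom.mem_range.mpr ⟨a * c, rfl⟩, a * z, ?_, rfl⟩
  simp [RingHom.mem_ker, map_mul, hz']

lemma mdi_mul_right (a : MA) {x : MA} (hx : x ∈ mdIdeal p G) :
    x * a ∈ mdIdeal p G := by
  rcases (AddSubgroup.mem_sup).mp hx with ⟨y, hy, z, hz, rfl⟩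
  rcases AddMonoidHom.mem_range.mp hy with ⟨c, rfl⟩
  have hz' : maAug p G z = 0 := by
    simpa [RingHom.mem_ker] using hz
  have h1 : (AddMonoidHom.mulLeft ((p : ℕ) : MA) c + z) * a
      = AddMonoidHom.mulLeft ((p : ℕ) : MA) (c * a) + z * a := by
    simp only [AddMonoidHom.coe_mulLeft]
    rw [add_mul, mul_assoc]
  rw [h1]
  refine (AddSubgroup.mem_sup).mpr
    ⟨_, AddMonoidHom.mem_range.mpr ⟨c * a, rfl⟩, z * a, ?_, rfl⟩
  simp [RingHom.mem_ker, map_mul, hz']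

lemma mem_ringPow_one {x : MA} (hx : x ∈ mdIdeal p G) :
    x ∈ (mdIdeal p G).ringPow 1 :=
  AddSubgroup.subset_closure ⟨[x], rfl, by simpa using hx, by simp⟩

lemma ringPow_mul_left (a : MA) {n : ℕ} {x : MA} (hx : x ∈ (mdIdeal p G).ringPow n) :
    a * x ∈ (mdIdeal p G).ringPow n := by
  cases n with
  | zero => trivial
  | succ n =>
    induction hx using AddSubgroup.closure_induction with
    | mem x hx =>
      obtain ⟨l, hlen, hmem, rfl⟩ := hx
      match l, hlen with
      | h :: t, hlen =>
        refine AddSubgroup.subset_closure ⟨(a * h) :: t, by simpa using hlen, ?_, ?_⟩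
        · intro y hy
          rcases List.mem_cons.mp hy with rfl | hy
          · exact mdi_mul_left a (hmem h (List.mem_cons_self))
          · exact hmem y (List.mem_cons_of_mem _ hy)
        · simp [List.prod_cons, mul_assoc]
    | zero => rw [mul_zero]; exact zero_mem _
    | add x y _ _ hx hy => rw [mul_add]; exact add_mem hx hy
    | neg x _ hx => rw [mul_neg]; exact neg_mem hx

lemma mdi_mul_ringPow {x y : MA} {n : ℕ} (hx : x ∈ mdIdeal p G)
    (hy : y ∈ (mdIdeal p G).ringPow n) : x * y ∈ (mdIdeal p G).ringPow (n + 1) := by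
  cases n with
  | zero => exact mem_ringPow_one (mdi_mul_right y hx)
  | succ n =>
    induction hy using AddSubgroup.closure_induction with
    | mem y hy =>
      obtain ⟨l, hlen, hmem, rfl⟩ := hy
      refine AddSubgroup.subset_closure ⟨x :: l, by simpa using hlen, ?_, by simp⟩
      intro z hz
      rcases List.mem_cons.mp hz with rfl | hz
      · exact hx
      · exact hmem z hz
    | zero => rw [mul_zero]; exact zero_mem _
    | add a b _ _ ha hb => rw [mul_add]; exact add_mem ha hb
    | neg a _ ha => rw [mul_neg]; exact neg_mem ha

lemma listprod_mem_ringPow {l : List MA} (h : ∀ y ∈ l, y ∈ mdIdeal p G) :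
    l.prod ∈ (mdIdeal p G).ringPow l.length := by
  induction l with
  | nil => trivial
  | cons a t ih =>
    rw [List.prod_cons, List.length_cons]
    exact mdi_mul_ringPow (h a (List.mem_cons_self))
      (ih fun y hy => h y (List.mem_cons_of_mem _ hy))

lemma ringPow_mul {i j : ℕ} {x y : MA} (hx : x ∈ (mdIdeal p G).ringPow i)
    (hy : y ∈ (mdIdeal p G).ringPow j) : x * y ∈ (mdIdeal p G).ringPow (i + j) := by
  induction i generalizing x with
  | zero => rw [Nat.zero_add]; exact ringPow_mul_left x hy
  | succ i ih =>
    induction hx using AddSubgroup.closure_induction with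
    | mem x hx =>
      obtain ⟨l, hlen, hmem, rfl⟩ := hx
      match l, hlen with
      | h :: t, hlen =>
        have ht : t.prod ∈ (mdIdeal p G).ringPow i := by
          have h2 := listprod_mem_ringPow (fun y hy => hmem y (List.mem_cons_of_mem _ hy))
          rwa [show t.length = i by simpa using hlen] at h2
        have h3 := mdi_mul_ringPow (hmem h (List.mem_cons_self)) (ih ht)
        rw [List.prod_cons, mul_assoc]
        rwa [show i + 1 + j = i + j + 1 from by omega]
    | zero => simpa using zero_mem _
    | add a b _ _ ha hb => rw [add_mul]; exact add_mem ha hb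
    | neg a _ ha => rw [neg_mul]; exact neg_mem ha

lemma ringPow_succ_le {n : ℕ} :
    (mdIdeal p G).ringPow (n + 1) ≤ (mdIdeal p G).ringPow n := by
  intro x hx
  induction hx using AddSubgroup.closure_induction with
  | mem x hx =>
    obtain ⟨l, hlen, hmem, rfl⟩ := hx
    match l, hlen with
    | h :: t, hlen =>
      have ht : t.prod ∈ (mdIdeal p G).ringPow n := by
        have h2 := listprod_mem_ringPow (fun y hy => hmem y (List.mem_cons_of_mem _ hy))
        rwa [show t.length = n by simpa using hlen] at h2
      rw [List.prod_cons]
      exact ringPow_mul_left h ht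
  | zero => exact zero_mem _
  | add a b _ _ ha hb => exact add_mem ha hb
  | neg a _ ha => exact neg_mem ha

lemma ringPow_le {m n : ℕ} (h : m ≤ n) :
    (mdIdeal p G).ringPow n ≤ (mdIdeal p G).ringPow m := by
  induction n, h using Nat.le_induction with
  | base => exact le_rfl
  | succ n hmn ih => exact ringPow_succ_le.trans ih

lemma ringPow_smul {n : ℕ} (c : ℤ_[p]) {x : MA} (hx : x ∈ (mdIdeal p G).ringPow n) :
    c • x ∈ (mdIdeal p G).ringPow n := by
  rw [Algebra.smul_def]
  exact ringPow_mul_left _ hx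

lemma pow_mem_ringPow {m : ℕ} {x : MA} (hx : x ∈ (mdIdeal p G).ringPow m) (t : ℕ) :
    x ^ t ∈ (mdIdeal p G).ringPow (t * m) := by
  induction t with
  | zero => rw [Nat.zero_mul]; trivial
  | succ t ih =>
    rw [pow_succ, Nat.succ_mul]
    exact ringPow_mul ih hx

/-! ### The lower p-series and omega -/

lemma lowerPSeries_succ_le (hU : IsUniform p G) (n : ℕ) :
    lowerPSeries p G (n + 1) ≤ lowerPSeries p G n := by
  intro g hg
  obtain ⟨h, hh, rfl⟩ := (hU.2.2.2 n).2.2 hg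
  exact pow_mem hh p

lemma lowerPSeries_antitone (hU : IsUniform p G) {m n : ℕ} (h : m ≤ n) :
    lowerPSeries p G n ≤ lowerPSeries p G m := by
  induction n, h using Nat.le_induction with
  | base => exact le_rfl
  | succ n hmn ih => exact (lowerPSeries_succ_le hU n).trans ih

lemma one_le_omegaVal (g : G) : 1 ≤ omegaVal p G g :=
  le_sSup ⟨0, by simp, Subgroup.mem_top g⟩

lemma mem_lowerPSeries_of_le (hU : IsUniform p G) {g : G} {k : ℕ}
    (h : (k : ℕ∞) + 1 ≤ omegaVal p G g) : g ∈ lowerPSeries p G k := by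
  have hex : ∃ t : ℕ, g ∈ lowerPSeries p G t ∧ k ≤ t := by
    by_contra hc
    push_neg at hc
    have hle : omegaVal p G g ≤ (k : ℕ∞) := by
      refine sSup_le ?_
      rintro x ⟨t, rfl, ht⟩
      have htk : t + 1 ≤ k := hc t ht
      exact_mod_cast Nat.cast_le.mpr htk
    have h2 : ((k + 1 : ℕ) : ℕ∞) ≤ ((k : ℕ) : ℕ∞) := by push_cast; exact h.trans hle
    exact absurd (Nat.cast_le.mp h2) (Nat.not_succ_le_self k)
  obtain ⟨t, ht, hkt⟩ := hex
  exact lowerPSeries_antitone hU hkt ht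

lemma sub_one_mem_ringPow (hU : IsUniform p G) :
    ∀ (k : ℕ) (g : G), g ∈ lowerPSeries p G k →
      MonoidAlgebra.of ℤ_[p] G g - 1 ∈ (mdIdeal p G).ringPow (k + 1)
  | 0, g, _ => mem_ringPow_one (of_sub_one_mem_mdIdeal g)
  | (k + 1), g, hg => by
    obtain ⟨h, hh, hhp⟩ := (hU.2.2.2 k).2.2 hg
    set y : MA := MonoidAlgebra.of ℤ_[p] G h - 1 with hy_def
    have hy : y ∈ (mdIdeal p G).ringPow (k + 1) := sub_one_mem_ringPow hU k h hh
    have hog : (MonoidAlgebra.of ℤ_[p] G g : MA) = (y + 1) ^ p := by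
      have hhp' : h ^ p = g := hhp
      rw [hy_def, sub_add_cancel, ← map_pow, hhp']
    have hexp : (MonoidAlgebra.of ℤ_[p] G g : MA) - 1 =
        ∑ i ∈ Finset.range p, y ^ (i + 1) * ((p.choose (i + 1) : ℕ) : MA) := by
      rw [hog, Commute.add_pow (Commute.one_right y)]
      simp only [one_pow, mul_one]
      rw [Finset.sum_range_succ']
      simp
    rw [hexp]
    refine AddSubgroup.sum_mem _ ?_
    intro i hi
    have hp2 : 2 ≤ p := (Fact.out : p.Prime).two_le
    by_cases hip : i + 1 = p
    · rw [hip, Nat.choose_self, Nat.cast_one, mul_one]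
      have hyp : y ^ p ∈ (mdIdeal p G).ringPow (p * (k + 1)) := pow_mem_ringPow hy p
      exact ringPow_le (by nlinarith) hyp
    · have h2 : i + 1 < p := lt_of_le_of_ne (Nat.succ_le_of_lt (Finset.mem_range.mp hi)) hip
      obtain ⟨m, hm⟩ := (Fact.out : p.Prime).dvd_choose_self (Nat.succ_ne_zero i) h2
      rw [hm]
      push_cast
      have hyi : y ^ (i + 1) ∈ (mdIdeal p G).ringPow (k + 1) :=
        ringPow_le (Nat.le_mul_of_pos_left _ (Nat.succ_pos i)) (pow_mem_ringPow hy (i + 1))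
      have h3 : y ^ (i + 1) * ((p : ℕ) : MA) ∈ (mdIdeal p G).ringPow (k + 1 + 1) :=
        ringPow_mul hyi (mem_ringPow_one mem_mdIdeal_pcast)
      have h4 : ((m : ℕ) : MA) ∈ (mdIdeal p G).ringPow 0 := trivial
      have h5 := ringPow_mul h3 h4
      rw [← mul_assoc]
      simpa using h5

/-! ### The span side -/

lemma mem_omegaFiltGenSet {n l : ℕ} (L : List G)
    (hc : (n : ℕ∞) ≤ (l : ℕ∞) + (L.map (omegaVal p G)).sum) :
    (p : ℤ_[p]) ^ l • (L.map fun g => MonoidAlgebra.of ℤ_[p] G g - 1).prod ∈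
      omegaFiltGenSet p G n :=
  ⟨l, L, hc, rfl⟩

lemma one_mem_spanA (n : ℕ) (hn : n = 0) :
    (1 : MA) ∈ Submodule.span ℤ_[p] (omegaFiltGenSet p G n) := by
  subst hn
  refine Submodule.subset_span ⟨0, [], by simp, by simp⟩

lemma of_sub_one_mem_spanA {n : ℕ} (g : G) (hn : (n : ℕ∞) ≤ omegaVal p G g) :
    MonoidAlgebra.of ℤ_[p] G g - 1 ∈ Submodule.span ℤ_[p] (omegaFiltGenSet p G n) := by
  refine Submodule.subset_span ⟨0, [g], by simpa using hn, by simp⟩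

lemma spanA_mul {i j : ℕ} {x y : MA}
    (hx : x ∈ Submodule.span ℤ_[p] (omegaFiltGenSet p G i))
    (hy : y ∈ Submodule.span ℤ_[p] (omegaFiltGenSet p G j)) :
    x * y ∈ Submodule.span ℤ_[p] (omegaFiltGenSet p G (i + j)) := by
  induction hx using Submodule.span_induction with
  | mem x hx =>
    induction hy using Submodule.span_induction with
    | mem y hy =>
      obtain ⟨l, L, hc, rfl⟩ := hx
      obtain ⟨l', L', hc', rfl⟩ := hy
      refine Submodule.subset_span ⟨l + l', L ++ L', ?_, ?_⟩
      · rw [List.map_append, List.sum_append]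
        push_cast
        calc ((i : ℕ∞) + j) ≤ ((l : ℕ∞) + (L.map (omegaVal p G)).sum)
            + ((l' : ℕ∞) + (L'.map (omegaVal p G)).sum) := add_le_add hc hc'
          _ = (l : ℕ∞) + (l' : ℕ∞) + ((L.map (omegaVal p G)).sum
            + (L'.map (omegaVal p G)).sum) := by rw [add_add_add_comm]
      · rw [smul_mul_smul_comm, ← pow_add, List.map_append, List.prod_append]
    | zero => rw [mul_zero]; exact zero_mem _
    | add a b _ _ ha hb => rw [mul_add]; exact add_mem ha hb
    | smul c a _ ha => rw [mul_smul_comm]; exact Submodule.smul_mem _ _ ha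
  | zero => rw [zero_mul]; exact zero_mem _
  | add a b _ _ ha hb => rw [add_mul]; exact add_mem ha hb
  | smul c a _ ha => rw [smul_mul_assoc]; exact Submodule.smul_mem _ _ ha

lemma spanA_of_mul {n : ℕ} (g : G) {x : MA}
    (hx : x ∈ Submodule.span ℤ_[p] (omegaFiltGenSet p G n)) :
    MonoidAlgebra.of ℤ_[p] G g * x ∈ Submodule.span ℤ_[p] (omegaFiltGenSet p G n) := by
  induction hx using Submodule.span_induction with
  | mem x hx =>
    obtain ⟨l, L, hc, rfl⟩ := hx
    have key : MonoidAlgebra.of ℤ_[p] G g *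
        ((p : ℤ_[p]) ^ l • (L.map fun g => MonoidAlgebra.of ℤ_[p] G g - 1).prod)
        = (p : ℤ_[p]) ^ l • (((g :: L).map fun g => MonoidAlgebra.of ℤ_[p] G g - 1).prod)
          + (p : ℤ_[p]) ^ l • (L.map fun g => MonoidAlgebra.of ℤ_[p] G g - 1).prod := by
      rw [mul_smul_comm, List.map_cons, List.prod_cons, sub_one_mul, ← smul_add]
      rw [sub_add_cancel]
    rw [key]
    refine add_mem (Submodule.subset_span (mem_omegaFiltGenSet _ ?_)) (Submodule.subset_span ⟨l, L, hc, rfl⟩)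
    rw [List.map_cons, List.sum_cons, ← add_assoc, add_comm (l : ℕ∞) (omegaVal p G g), add_assoc]
    exact hc.trans (le_add_self)
  | zero => rw [mul_zero]; exact zero_mem _
  | add a b _ _ ha hb => rw [mul_add]; exact add_mem ha hb
  | smul c a _ ha => rw [mul_smul_comm]; exact Submodule.smul_mem _ _ ha

lemma spanA_mul_left {n : ℕ} (a : MA) {x : MA}
    (hx : x ∈ Submodule.span ℤ_[p] (omegaFiltGenSet p G n)) :
    a * x ∈ Submodule.span ℤ_[p] (omegaFiltGenSet p G n) := by
  have ha : a ∈ Submodule.span ℤ_[p] (Set.range (MonoidAlgebra.of ℤ_[p] G)) :=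
    Submodule.span_mono (Set.image_subset_range _ _) (MonoidAlgebra.mem_span_support a)
  induction ha using Submodule.span_induction with
  | mem a haa =>
    obtain ⟨g, rfl⟩ := haa
    exact spanA_of_mul g hx
  | zero => rw [zero_mul]; exact zero_mem _
  | add a b _ _ ha hb => rw [add_mul]; exact add_mem ha hb
  | smul c a _ ha => rw [smul_mul_assoc]; exact Submodule.smul_mem _ _ ha

lemma spanA_zero_top (x : MA) : x ∈ Submodule.span ℤ_[p] (omegaFiltGenSet p G 0) := by
  have := spanA_mul_left (n := 0) x (one_mem_spanA 0 rfl)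
  simpa using this

lemma pcast_mem_spanA_one : ((p : ℕ) : MA) ∈ Submodule.span ℤ_[p] (omegaFiltGenSet p G 1) := by
  refine Submodule.subset_span ⟨1, [], by simp, ?_⟩
  simp [Algebra.smul_def]

lemma mdIdeal_le_spanA_one {x : MA} (hx : x ∈ mdIdeal p G) :
    x ∈ Submodule.span ℤ_[p] (omegaFiltGenSet p G 1) := by
  rcases (AddSubgroup.mem_sup).mp hx with ⟨y, hy, z, hz, rfl⟩
  rcases AddMonoidHom.mem_range.mp hy with ⟨c, rfl⟩
  have hz' : maAug p G z = 0 := by simpa [RingHom.mem_ker] using hz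
  refine add_mem ?_ ?_
  · show ((p : ℕ) : MA) * c ∈ _
    have := spanA_mul (i := 1) (j := 0) pcast_mem_spanA_one (spanA_zero_top c)
    simpa using this
  · -- decompose z via its support
    have h1 : (Finsupp.sum z.coeff fun g c => c • (MonoidAlgebra.of ℤ_[p] G g : MA)) = z := by
      conv_rhs => rw [← MonoidAlgebra.sum_coeff_single z]
      refine Finsupp.sum_congr fun g hg => ?_
      rw [MonoidAlgebra.of_apply, MonoidAlgebra.smul_single', mul_one]
    have h2 : (Finsupp.sum z.coeff fun g c => c • (1 : MA)) = (maAug p G z) • 1 := by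
      have haug : maAug p G z = Finsupp.sum z.coeff fun _ c => c := by
        conv_lhs => rw [← MonoidAlgebra.sum_coeff_single z]
        rw [map_finsuppSum]
        exact Finsupp.sum_congr fun g hg => maAug_single g (z.coeff g)
      rw [haug, Finsupp.sum, Finsupp.sum, Finset.sum_smul]
    have h3 : (Finsupp.sum z.coeff fun g c => c • (MonoidAlgebra.of ℤ_[p] G g - 1 : MA))
        = (Finsupp.sum z.coeff fun g c => c • (MonoidAlgebra.of ℤ_[p] G g : MA))
          - (Finsupp.sum z.coeff fun g c => c • (1 : MA)) := by
      rw [← Finsupp.sum_sub]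
      exact Finsupp.sum_congr fun g hg => smul_sub _ _ _
    have hrw : (Finsupp.sum z.coeff fun g c => c • (MonoidAlgebra.of ℤ_[p] G g - 1 : MA)) = z := by
      rw [h3, h1, h2, hz', zero_smul, sub_zero]
    rw [← hrw, Finsupp.sum]
    refine Submodule.sum_mem _ fun g hg => Submodule.smul_mem _ _ ?_
    exact of_sub_one_mem_spanA g (by simpa using one_le_omegaVal g)

lemma listprod_mem_spanA (l : List MA) (h : ∀ y ∈ l, y ∈ mdIdeal p G) :
    l.prod ∈ Submodule.span ℤ_[p] (omegaFiltGenSet p G l.length) := by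
  induction l with
  | nil => exact one_mem_spanA 0 rfl
  | cons a t ih =>
    rw [List.prod_cons, List.length_cons]
    have := spanA_mul (i := 1) (j := t.length)
      (mdIdeal_le_spanA_one (h a (List.mem_cons_self)))
      (ih fun y hy => h y (List.mem_cons_of_mem _ hy))
    rwa [add_comm 1 t.length] at this

lemma gen_mem_ringPow (hU : IsUniform p G) :
    ∀ (L : List G) (n l : ℕ),
      (n : ℕ∞) ≤ (l : ℕ∞) + (L.map (omegaVal p G)).sum →
      (p : ℤ_[p]) ^ l • (L.map fun g => MonoidAlgebra.of ℤ_[p] G g - 1).prod ∈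
        (mdIdeal p G).ringPow n := by
  intro L
  induction L with
  | nil =>
    intro n l hc
    simp only [List.map_nil, List.sum_nil, add_zero] at hc
    have hnl : n ≤ l := by exact_mod_cast hc
    have hx : (p : ℤ_[p]) ^ l • ((List.map (fun g => MonoidAlgebra.of ℤ_[p] G g - 1) []).prod)
        = ((p : ℕ) : MA) ^ l := by
      rw [List.map_nil, List.prod_nil, Algebra.smul_def, mul_one, map_pow, map_natCast]
    rw [hx]
    have := pow_mem_ringPow (mem_ringPow_one (mem_mdIdeal_pcast (p := p) (G := G))) l
    rw [mul_one] at this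
    exact ringPow_le hnl this
  | cons g T ih =>
    intro n l hc
    rw [List.map_cons, List.sum_cons] at hc
    rw [List.map_cons, List.prod_cons, ← mul_smul_comm]
    by_cases htop : omegaVal p G g = ⊤
    · have hgP : g ∈ lowerPSeries p G n :=
        mem_lowerPSeries_of_le hU (by rw [htop]; exact le_top)
      have hhead := ringPow_succ_le (sub_one_mem_ringPow hU n g hgP)
      have htail : (p : ℤ_[p]) ^ l • (T.map fun g => MonoidAlgebra.of ℤ_[p] G g - 1).prod ∈
          (mdIdeal p G).ringPow 0 := trivial
      simpa using ringPow_mul hhead htail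
    · have h1 := one_le_omegaVal (p := p) g
      lift omegaVal p G g to ℕ using htop with w hw
      have hw1 : 1 ≤ w := by exact_mod_cast h1
      have hgP : g ∈ lowerPSeries p G (w - 1) := by
        refine mem_lowerPSeries_of_le hU ?_
        rw [← hw]
        exact_mod_cast (Nat.sub_add_cancel hw1).le
      have hhead : MonoidAlgebra.of ℤ_[p] G g - 1 ∈ (mdIdeal p G).ringPow w := by
        have := sub_one_mem_ringPow hU (w - 1) g hgP
        rwa [Nat.sub_add_cancel hw1] at this
      by_cases hwn : n ≤ w
      · have htail : (p : ℤ_[p]) ^ l • (T.map fun g => MonoidAlgebra.of ℤ_[p] G g - 1).prod ∈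
            (mdIdeal p G).ringPow 0 := trivial
        simpa using ringPow_mul (ringPow_le hwn hhead) htail
      · push_neg at hwn
        have hcond' : ((n - w : ℕ) : ℕ∞) ≤ (l : ℕ∞) + (T.map (omegaVal p G)).sum := by
          have hc2 : ((n : ℕ∞)) ≤ ((l : ℕ∞) + (T.map (omegaVal p G)).sum) + (w : ℕ∞) := by
            calc (n : ℕ∞) ≤ (l : ℕ∞) + ((w : ℕ∞) + (T.map (omegaVal p G)).sum) := hc
              _ = ((l : ℕ∞) + (T.map (omegaVal p G)).sum) + (w : ℕ∞) := by
                rw [add_comm (w : ℕ∞), ← add_assoc]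
          have hn : ((n : ℕ∞)) = ((n - w : ℕ) : ℕ∞) + (w : ℕ∞) := by
            rw [← Nat.cast_add, Nat.sub_add_cancel (le_of_lt hwn)]
          rw [hn] at hc2
          exact (WithTop.add_le_add_iff_right (WithTop.natCast_ne_top w)).mp hc2
        have htail := ih (n - w) l hcond'
        have := ringPow_mul hhead htail
        rwa [show w + (n - w) = n from Nat.add_sub_cancel' (le_of_lt hwn)] at this

end Aux

/-- **Statement 2.** Let `G` be a uniform pro-`p` group and `ℤ_p[G]` the group algebra of the
underlying abstract group.  The filtration on `ℤ_p[G]` induced by the `p`-valuation `ω` (whose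
`n`-th term `A_n` is the `ℤ_p`-submodule generated by all elements `p^l (g_1 − 1) ⋯ (g_m − 1)`
with `l, m ∈ ℕ`, `g_i ∈ G` and `l + ω(g_1) + ⋯ + ω(g_m) ≥ n`) coincides with the `𝔪_d`-adic
filtration, i.e. `A_n = 𝔪_d^n` for all `n`, where `𝔪_d = p·ℤ_p[G] + I_d(G)` and `I_d(G)` is the
augmentation ideal of `ℤ_p[G]`. -/
theorem omega_filtration_eq_md_adic (hU : IsUniform p G) :
    ∀ n : ℕ,
      (Submodule.span ℤ_[p] (omegaFiltGenSet p G n) : Set (MonoidAlgebra ℤ_[p] G)) =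
        ((mdIdeal p G).ringPow n : Set (MonoidAlgebra ℤ_[p] G)) := by
  intro n
  ext x
  simp only [SetLike.mem_coe]
  constructor
  · intro hx
    induction hx using Submodule.span_induction with
    | mem x hx =>
      obtain ⟨l, L, hc, rfl⟩ := hx
      exact gen_mem_ringPow hU L n l hc
    | zero => exact zero_mem _
    | add a b _ _ ha hb => exact add_mem ha hb
    | smul c a _ ha => exact ringPow_smul c ha
  · intro hx
    cases n with
    | zero => exact spanA_zero_top x
    | succ n =>
      induction hx using AddSubgroup.closure_induction with
      | mem x hx =>
        obtain ⟨l, hlen, hmem, rfl⟩ := hx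
        have := listprod_mem_spanA l hmem
        rwa [hlen] at this
      | zero => exact zero_mem _
      | add a b _ _ ha hb => exact add_mem ha hb
      | neg a _ ha => exact neg_mem ha

end Statement
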